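/- Let P ↷ I be a group action. For finite B ⊆ I and a ∈ I, the disjointifying rank Krk satisfies monotonicity: if B ⊆ C are finite subsets of I, then Krk(a, C) ≤ Krk(a, B). -/
import Mathlib


/-- `a' ≅_B a`: some `g ∈ P` fixes `B` pointwise and sends `a` to `a'`. -/
def ConjOver (P : Type*) [Group P] {I : Type*} [MulAction P I] (B : Set I) (a a' : I) : Prop :=
  ∃ g : P, (∀ b ∈ B, g • b = b) ∧ g • a = a'

/-- Disjointifying rank: `KrkLe P α a B` means `Krk(a, B) ≤ α`. -/
def KrkLe (P : Type*) [Group P] {I : Type*} [MulAction P I] (α : Ordinal) (a : I) (B : Set I) : Prop :=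
  (∀ g : P, (∀ b ∈ B, g • b = b) → g • a = a) ∨
  (∃ c : I, ∀ c' : I, ConjOver P B c c' →
    ∃ β : Ordinal, ∃ _ : β < α, KrkLe P β a (insert c' B)) ∨
  (∀ a' : I, ConjOver P B a a' →
    (∃ β : Ordinal, ∃ _ : β < α, KrkLe P β a (insert a' B)) ∨
    (∃ β : Ordinal, ∃ _ : β < α, KrkLe P β a' (insert a B)))
termination_by α

lemma conjOver_mono {P : Type*} [Group P] {I : Type*} [MulAction P I]
    {B C : Set I} (hBC : B ⊆ C) {a a' : I} (h : ConjOver P C a a') :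
    ConjOver P B a a' := by
  obtain ⟨g, hg, hga⟩ := h
  exact ⟨g, fun b hb => hg b (hBC hb), hga⟩

lemma krkLe_mono {P : Type*} [Group P] {I : Type*} [MulAction P I]
    (α : Ordinal) : ∀ (B C : Set I), B ⊆ C → ∀ a : I, KrkLe P α a B → KrkLe P α a C := by
  induction α using Ordinal.induction with
  | h α IH =>
    intro B C hBC a h
    rw [KrkLe] at h ⊢
    rcases h with h | ⟨c, hc⟩ | h
    · exact Or.inl fun g hg => h g fun b hb => hg b (hBC hb)
    · refine Or.inr (Or.inl ⟨c, fun c' hc' => ?_⟩)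
      obtain ⟨β, hβ, hk⟩ := hc c' (conjOver_mono hBC hc')
      exact ⟨β, hβ, IH β hβ _ _ (Set.insert_subset_insert hBC) a hk⟩
    · refine Or.inr (Or.inr fun a' ha' => ?_)
      rcases h a' (conjOver_mono hBC ha') with ⟨β, hβ, hk⟩ | ⟨β, hβ, hk⟩
      · exact Or.inl ⟨β, hβ, IH β hβ _ _ (Set.insert_subset_insert hBC) a hk⟩
      · exact Or.inr ⟨β, hβ, IH β hβ _ _ (Set.insert_subset_insert hBC) a' hk⟩

/-- Monotonicity of the disjointifying rank: if `B ⊆ C` then `Krk(a, C) ≤ Krk(a, B)`. -/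
theorem stmt_12 {P : Type*} [Group P] {I : Type*} [MulAction P I]
    (B C : Set I) (hB : B.Finite) (hC : C.Finite) (hBC : B ⊆ C) (a : I)
    (α : Ordinal) (h : KrkLe P α a B) :
    KrkLe P α a C := krkLe_mono α B C hBC a h
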